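/- Let Σ and Σ̂ be d×d positive semidefinite symmetric matrices, and let P̂_⊥ be the orthogonal projection onto the complement of the span of the d_r leading eigenvectors of Σ̂. Then tr(P̂_⊥ Σ P̂_⊥) ≤ Σ_{i=d_r+1}^d λ_i(Σ) + 2√(d_r)·‖Σ̂ − Σ‖_F, where eigenvalues are in nonincreasing order and ‖·‖_F is the Frobenius norm. -/

import Mathlib

open Matrix
/-- Frobenius norm of a real matrix. -/
noncomputable def frob {d : ℕ} (A : Matrix (Fin d) (Fin d) ℝ) : ℝ :=
  Real.sqrt (∑ i, ∑ j, (A i j) ^ 2)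

/-- Sum over indices < r equals sum over Fin r. -/
private lemma sum_filter_lt {d r : ℕ} (hr : r ≤ d) (f : Fin d → ℝ) :
    ∑ i ∈ Finset.univ.filter (fun i : Fin d => (i : ℕ) < r), f i
      = ∑ j : Fin r, f (Fin.castLE hr j) := by
  refine Finset.sum_bij' (fun i hi => (⟨(i : ℕ), (Finset.mem_filter.mp hi).2⟩ : Fin r))
    (fun j _ => Fin.castLE hr j) ?_ ?_ ?_ ?_ ?_
  · intro a ha; exact Finset.mem_univ _
  · intro j _; exact Finset.mem_filter.mpr ⟨Finset.mem_univ _, by simp⟩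
  · intro a ha; ext; simp
  · intro a ha; simp
  · intro a ha; simp

private lemma filter_lt_card {d r : ℕ} (hr : r ≤ d) :
    ((Finset.univ.filter (fun i : Fin d => (i : ℕ) < r)).card : ℝ) = r := by
  have := sum_filter_lt hr (fun _ => (1 : ℝ))
  simpa using this

private lemma lemA {d r : ℕ} (hr : r ≤ d) (μ : Fin d → ℝ) (hμ : Antitone μ)
    (t : Fin d → ℝ) (ht0 : ∀ i, 0 ≤ t i) (ht1 : ∀ i, t i ≤ 1)
    (hts : ∑ i, t i = r) :
    ∑ i, μ i * t i ≤ ∑ i ∈ Finset.univ.filter (fun i : Fin d => (i : ℕ) < r), μ i := by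
  rcases eq_or_lt_of_le hr with h | h
  · subst h
    have h1 : ∀ i, t i = 1 := by
      by_contra hc
      push_neg at hc
      obtain ⟨i0, hi0⟩ := hc
      have : ∑ i, t i < ∑ _i : Fin r, (1 : ℝ) :=
        Finset.sum_lt_sum (fun i _ => ht1 i)
          ⟨i0, Finset.mem_univ _, lt_of_le_of_ne (ht1 i0) hi0⟩
      simp [hts] at this
    have hf : Finset.univ.filter (fun i : Fin r => (i : ℕ) < r) = Finset.univ := by
      ext i; simp [i.isLt]
    simp [h1, hf]
  · set c := μ ⟨r, h⟩ with hc
    have key : ∀ i : Fin d, μ i * t i ≤ (if (i : ℕ) < r then μ i - c else 0) + c * t i := by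
      intro i
      by_cases hi : (i : ℕ) < r
      · simp only [if_pos hi]
        have h1 : c ≤ μ i := hμ (by simp [Fin.le_def]; omega)
        nlinarith [ht1 i, ht0 i]
      · simp only [if_neg hi]
        have h1 : μ i ≤ c := hμ (by simp [Fin.le_def]; omega)
        nlinarith [ht0 i]
    calc ∑ i, μ i * t i
        ≤ ∑ i : Fin d, ((if (i : ℕ) < r then μ i - c else 0) + c * t i) :=
          Finset.sum_le_sum fun i _ => key i
      _ = (∑ i ∈ Finset.univ.filter (fun i : Fin d => (i : ℕ) < r), (μ i - c))
            + c * ∑ i, t i := by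
          rw [Finset.sum_add_distrib, ← Finset.mul_sum, Finset.sum_filter]
      _ = ∑ i ∈ Finset.univ.filter (fun i : Fin d => (i : ℕ) < r), μ i := by
          rw [Finset.sum_sub_distrib, Finset.sum_const, hts, nsmul_eq_mul]
          have := filter_lt_card (d := d) (r := r) h.le
          rw [this]; ring

private lemma entry_decomp {d : ℕ} (A E : Matrix (Fin d) (Fin d) ℝ) (lam : Fin d → ℝ)
    (hE : Eᵀ * E = 1)
    (hAE : ∀ m, A *ᵥ (fun i => E i m) = lam m • (fun i => E i m)) (i k : Fin d) :
    A i k = ∑ m, lam m * (E i m * E k m) := by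
  have hE' : E * Eᵀ = 1 := mul_eq_one_comm.mp hE
  have h2 : ∀ i m, (A * E) i m = lam m * E i m := by
    intro i m
    have := congrFun (hAE m) i
    simpa [Matrix.mulVec, Matrix.mul_apply, dotProduct] using this
  have h1 : A i k = (A * E * Eᵀ) i k := by
    rw [Matrix.mul_assoc, hE', Matrix.mul_one]
  rw [h1, Matrix.mul_apply]
  refine Finset.sum_congr rfl fun m _ => ?_
  rw [h2 i m, Matrix.transpose_apply]
  ring

private lemma exists_E {d : ℕ} (A : Matrix (Fin d) (Fin d) ℝ) (hA : A.IsHermitian)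
    (μ : Fin d → ℝ) (σ : Equiv.Perm (Fin d)) (hμ : μ = hA.eigenvalues ∘ σ) :
    ∃ E : Matrix (Fin d) (Fin d) ℝ, Eᵀ * E = 1 ∧
      ∀ m, A *ᵥ (fun i => E i m) = μ m • (fun i => E i m) := by
  refine ⟨Matrix.of (fun i m => hA.eigenvectorBasis (σ m) i), ?_, ?_⟩
  · ext m m'
    have horth := hA.eigenvectorBasis.orthonormal
    rw [orthonormal_iff_ite] at horth
    have h := horth (σ m) (σ m')
    simp only [PiLp.inner_apply, RCLike.inner_apply, conj_trivial] at h
    simp only [Matrix.mul_apply, Matrix.transpose_apply, Matrix.of_apply, Matrix.one_apply]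
    simp only [mul_comm] at h ⊢
    rw [h]
    simp [EmbeddingLike.apply_eq_iff_eq]
  · intro m
    have := hA.mulVec_eigenvectorBasis (σ m)
    rw [hμ]
    simpa using this

private lemma traceB {d r : ℕ} (A : Matrix (Fin d) (Fin d) ℝ)
    (V : Matrix (Fin d) (Fin r) ℝ) (hV : Vᵀ * V = 1) (ν : Fin r → ℝ)
    (hAV : ∀ j, A *ᵥ (fun i => V i j) = ν j • (fun i => V i j)) :
    Matrix.trace (V * Vᵀ * A) = ∑ j, ν j := by
  have h2 : ∀ i j, (A * V) i j = ν j * V i j := by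
    intro i j
    have := congrFun (hAV j) i
    simpa [Matrix.mulVec, Matrix.mul_apply, dotProduct] using this
  have hd : ∀ j : Fin r, (∑ i, V i j * V i j) = 1 := by
    intro j
    have := congrFun (congrFun hV j) j
    simpa [Matrix.mul_apply, Matrix.transpose_apply, Matrix.one_apply] using this
  have hre : Matrix.trace (V * Vᵀ * A) = Matrix.trace (Vᵀ * (A * V)) := by
    rw [Matrix.trace_mul_comm, ← Matrix.mul_assoc, Matrix.trace_mul_comm]
  have key : ∀ j, (Vᵀ * (A * V)) j j = ν j := by
    intro j
    rw [Matrix.mul_apply]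
    calc ∑ i, Vᵀ j i * (A * V) i j = ∑ i, ν j * (V i j * V i j) := by
          refine Finset.sum_congr rfl fun i _ => ?_
          rw [Matrix.transpose_apply, h2]; ring
      _ = ν j := by rw [← Finset.mul_sum, hd j, mul_one]
  rw [hre, Matrix.trace]
  simp only [Matrix.diag]
  exact Finset.sum_congr rfl fun j _ => key j

private lemma frob_nonneg {d : ℕ} (A : Matrix (Fin d) (Fin d) ℝ) : 0 ≤ frob A :=
  Real.sqrt_nonneg _

private lemma traceCS {d : ℕ} (Q B : Matrix (Fin d) (Fin d) ℝ) (hQ : Qᵀ = Q) :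
    |Matrix.trace (Q * B)| ≤ frob Q * frob B := by
  have hQs : ∀ i k, Q k i = Q i k := by
    intro i k
    have h := congrFun (congrFun hQ i) k
    rwa [Matrix.transpose_apply] at h
  have htr : Matrix.trace (Q * B)
      = ∑ p : Fin d × Fin d, Q p.1 p.2 * B p.1 p.2 := by
    rw [Matrix.trace]
    simp only [Matrix.diag, Matrix.mul_apply]
    rw [Fintype.sum_prod_type, Finset.sum_comm]
    refine Finset.sum_congr rfl fun i _ => Finset.sum_congr rfl fun k _ => ?_
    rw [hQs i k]
  have hcs := Finset.sum_mul_sq_le_sq_mul_sq Finset.univ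
      (fun p : Fin d × Fin d => Q p.1 p.2) (fun p : Fin d × Fin d => B p.1 p.2)
  have hfq : frob Q = Real.sqrt (∑ p : Fin d × Fin d, (Q p.1 p.2) ^ 2) := by
    rw [frob, Fintype.sum_prod_type]
  have hfb : frob B = Real.sqrt (∑ p : Fin d × Fin d, (B p.1 p.2) ^ 2) := by
    rw [frob, Fintype.sum_prod_type]
  rw [htr, hfq, hfb, ← Real.sqrt_mul (Finset.sum_nonneg fun p _ => sq_nonneg _)]
  rw [← Real.sqrt_sq_eq_abs]
  exact Real.sqrt_le_sqrt hcs

private lemma frob_proj {d r : ℕ} (W : Matrix (Fin d) (Fin r) ℝ) (hW : Wᵀ * W = 1) :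
    frob (W * Wᵀ) = Real.sqrt r := by
  have hsym : (W * Wᵀ)ᵀ = W * Wᵀ := by
    rw [Matrix.transpose_mul, Matrix.transpose_transpose]
  have hidem : (W * Wᵀ) * (W * Wᵀ) = W * Wᵀ := by
    rw [Matrix.mul_assoc, ← Matrix.mul_assoc Wᵀ W, hW, Matrix.one_mul]
  have hss : (∑ i, ∑ k, ((W * Wᵀ) i k) ^ 2) = (r : ℝ) := by
    have h1 : (∑ i, ∑ k, ((W * Wᵀ) i k) ^ 2)
        = Matrix.trace ((W * Wᵀ) * (W * Wᵀ)) := by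
      rw [Matrix.trace]
      simp only [Matrix.diag]
      refine Finset.sum_congr rfl fun i _ => ?_
      conv_rhs => rw [Matrix.mul_apply]
      refine Finset.sum_congr rfl fun k _ => ?_
      have hk := congrFun (congrFun hsym i) k
      rw [Matrix.transpose_apply] at hk
      rw [hk]; ring
    rw [h1, hidem, Matrix.trace_mul_comm, hW, Matrix.trace_one]
    simp
  rw [frob, hss]

private lemma kyfan {d r : ℕ} (hr : r ≤ d) (A E : Matrix (Fin d) (Fin d) ℝ)
    (μ : Fin d → ℝ) (hμ : Antitone μ)
    (hE : Eᵀ * E = 1)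
    (hAE : ∀ m, A *ᵥ (fun i => E i m) = μ m • (fun i => E i m))
    (W : Matrix (Fin d) (Fin r) ℝ) (hW : Wᵀ * W = 1) :
    Matrix.trace (W * Wᵀ * A) ≤
      ∑ i ∈ Finset.univ.filter (fun i : Fin d => (i : ℕ) < r), μ i := by
  have hentry := entry_decomp A E μ hE hAE
  set a : Fin r → Fin d → ℝ := fun j m => ∑ i, W i j * E i m with ha
  set t : Fin d → ℝ := fun m => ∑ j, (a j m) ^ 2 with htdef
  have hWo : ∀ j j' : Fin r, (∑ i, W i j * W i j') = if j = j' then 1 else 0 := by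
    intro j j'
    have := congrFun (congrFun hW j) j'
    simpa [Matrix.mul_apply, Matrix.transpose_apply, Matrix.one_apply] using this
  have hE' : E * Eᵀ = 1 := mul_eq_one_comm.mp hE
  have hrow : ∀ i k : Fin d, (∑ m, E i m * E k m) = if i = k then 1 else 0 := by
    intro i k
    have := congrFun (congrFun hE' i) k
    simpa [Matrix.mul_apply, Matrix.transpose_apply, Matrix.one_apply] using this
  have hEcol : ∀ m : Fin d, (∑ i, E i m * E i m) = 1 := by
    intro m
    have := congrFun (congrFun hE m) m
    simpa [Matrix.mul_apply, Matrix.transpose_apply, Matrix.one_apply] using this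
  -- trace = ∑ m, μ m * t m
  have hAW : ∀ i j, (A * W) i j = ∑ m, μ m * (E i m * a j m) := by
    intro i j
    rw [Matrix.mul_apply]
    calc ∑ k, A i k * W k j = ∑ k, ∑ m, μ m * (E i m * E k m) * W k j := by
          refine Finset.sum_congr rfl fun k _ => ?_
          rw [hentry i k, Finset.sum_mul]
      _ = ∑ m, ∑ k, μ m * (E i m * E k m) * W k j := Finset.sum_comm
      _ = ∑ m, μ m * (E i m * a j m) := by
          refine Finset.sum_congr rfl fun m _ => ?_
          simp only [ha, Finset.mul_sum]
          refine Finset.sum_congr rfl fun k _ => ?_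
          ring
  have hdiag : ∀ j, (Wᵀ * (A * W)) j j = ∑ m, μ m * (a j m) ^ 2 := by
    intro j
    rw [Matrix.mul_apply]
    calc ∑ i, Wᵀ j i * (A * W) i j
        = ∑ i, ∑ m, W i j * (μ m * (E i m * a j m)) := by
          refine Finset.sum_congr rfl fun i _ => ?_
          rw [Matrix.transpose_apply, hAW i j, Finset.mul_sum]
      _ = ∑ m, ∑ i, W i j * (μ m * (E i m * a j m)) := Finset.sum_comm
      _ = ∑ m, μ m * (a j m) ^ 2 := by
          refine Finset.sum_congr rfl fun m _ => ?_
          have h1 : ∑ i, W i j * (μ m * (E i m * a j m))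
              = (μ m * a j m) * ∑ i, W i j * E i m := by
            rw [Finset.mul_sum]
            refine Finset.sum_congr rfl fun i _ => ?_
            ring
          rw [h1, show (∑ i, W i j * E i m) = a j m from rfl]
          ring
  have htr : Matrix.trace (W * Wᵀ * A) = ∑ m, μ m * t m := by
    have hre : Matrix.trace (W * Wᵀ * A) = Matrix.trace (Wᵀ * (A * W)) := by
      rw [Matrix.trace_mul_comm, ← Matrix.mul_assoc, Matrix.trace_mul_comm]
    rw [hre, Matrix.trace]
    simp only [Matrix.diag]
    calc ∑ j, (Wᵀ * (A * W)) j j = ∑ j, ∑ m, μ m * (a j m) ^ 2 :=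
          Finset.sum_congr rfl fun j _ => hdiag j
      _ = ∑ m, ∑ j, μ m * (a j m) ^ 2 := Finset.sum_comm
      _ = ∑ m, μ m * t m := by
          refine Finset.sum_congr rfl fun m _ => ?_
          rw [show t m = ∑ j, (a j m) ^ 2 from rfl, Finset.mul_sum]
  have ht0 : ∀ m, 0 ≤ t m := fun m => Finset.sum_nonneg fun j _ => sq_nonneg _
  have hsq : ∀ m, (∑ i, (∑ j, W i j * a j m) ^ 2) = t m := by
    intro m
    calc ∑ i, (∑ j, W i j * a j m) ^ 2
        = ∑ i, ∑ j, ∑ j', (W i j * a j m) * (W i j' * a j' m) := by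
          refine Finset.sum_congr rfl fun i _ => ?_
          rw [sq, Finset.sum_mul_sum]
      _ = ∑ j, ∑ j', ∑ i, (W i j * a j m) * (W i j' * a j' m) := by
          rw [Finset.sum_comm]
          exact Finset.sum_congr rfl fun j _ => Finset.sum_comm
      _ = ∑ j, ∑ j', (a j m * a j' m) * ∑ i, W i j * W i j' := by
          refine Finset.sum_congr rfl fun j _ => Finset.sum_congr rfl fun j' _ => ?_
          rw [Finset.mul_sum]
          refine Finset.sum_congr rfl fun i _ => ?_
          ring
      _ = ∑ j, ∑ j', (a j m * a j' m) * (if j = j' then 1 else 0) := by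
          refine Finset.sum_congr rfl fun j _ => Finset.sum_congr rfl fun j' _ => ?_
          rw [hWo j j']
      _ = t m := by
          rw [show t m = ∑ j, (a j m) ^ 2 from rfl]
          refine Finset.sum_congr rfl fun j _ => ?_
          simp [mul_ite, sq]
  have hcross : ∀ m, (∑ i, E i m * (∑ j, W i j * a j m)) = t m := by
    intro m
    calc ∑ i, E i m * (∑ j, W i j * a j m)
        = ∑ i, ∑ j, a j m * (W i j * E i m) := by
          refine Finset.sum_congr rfl fun i _ => ?_
          rw [Finset.mul_sum]
          refine Finset.sum_congr rfl fun j _ => ?_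
          ring
      _ = ∑ j, a j m * ∑ i, W i j * E i m := by
          rw [Finset.sum_comm]
          exact Finset.sum_congr rfl fun j _ => (Finset.mul_sum _ _ _).symm
      _ = t m := by
          rw [show t m = ∑ j, (a j m) ^ 2 from rfl]
          refine Finset.sum_congr rfl fun j _ => ?_
          rw [show (∑ i, W i j * E i m) = a j m from rfl]
          ring
  have ht1 : ∀ m, t m ≤ 1 := by
    intro m
    have hnn : (0 : ℝ) ≤ ∑ i, (E i m - ∑ j, W i j * a j m) ^ 2 :=
      Finset.sum_nonneg fun i _ => sq_nonneg _
    have hexp : ∑ i, (E i m - ∑ j, W i j * a j m) ^ 2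
        = (∑ i, E i m * E i m) - 2 * (∑ i, E i m * (∑ j, W i j * a j m))
          + ∑ i, (∑ j, W i j * a j m) ^ 2 := by
      rw [show (∑ i, (E i m - ∑ j, W i j * a j m) ^ 2)
          = ∑ i, (E i m * E i m - 2 * (E i m * (∑ j, W i j * a j m))
            + (∑ j, W i j * a j m) ^ 2) from Finset.sum_congr rfl fun i _ => by ring]
      rw [Finset.sum_add_distrib, Finset.sum_sub_distrib, ← Finset.mul_sum]
    rw [hexp, hEcol m, hcross m, hsq m] at hnn
    linarith
  have hts : ∑ m, t m = (r : ℝ) := by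
    have hcol : ∀ j : Fin r, (∑ m, (a j m) ^ 2) = 1 := by
      intro j
      calc ∑ m, (a j m) ^ 2
          = ∑ m, ∑ i, ∑ k, (W i j * E i m) * (W k j * E k m) := by
            refine Finset.sum_congr rfl fun m _ => ?_
            rw [sq, show a j m = ∑ i, W i j * E i m from rfl, Finset.sum_mul_sum]
        _ = ∑ i, ∑ k, ∑ m, (W i j * E i m) * (W k j * E k m) := by
            rw [Finset.sum_comm]
            exact Finset.sum_congr rfl fun i _ => Finset.sum_comm
        _ = ∑ i, ∑ k, (W i j * W k j) * ∑ m, E i m * E k m := by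
            refine Finset.sum_congr rfl fun i _ => Finset.sum_congr rfl fun k _ => ?_
            rw [Finset.mul_sum]
            refine Finset.sum_congr rfl fun m _ => ?_
            ring
        _ = ∑ i, ∑ k, (W i j * W k j) * (if i = k then 1 else 0) := by
            refine Finset.sum_congr rfl fun i _ => Finset.sum_congr rfl fun k _ => ?_
            rw [hrow i k]
        _ = ∑ i, W i j * W i j := by
            refine Finset.sum_congr rfl fun i _ => ?_
            simp [mul_ite]
        _ = 1 := by
            have := hWo j j
            simpa using this
    calc ∑ m, t m = ∑ m, ∑ j, (a j m) ^ 2 := rfl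
      _ = ∑ j, ∑ m, (a j m) ^ 2 := Finset.sum_comm
      _ = ∑ j : Fin r, (1 : ℝ) := Finset.sum_congr rfl fun j _ => hcol j
      _ = (r : ℝ) := by simp
  rw [htr]
  exact lemA hr μ hμ t ht0 ht1 hts

/-- With `P⊥ = 1 - V Vᵀ` the projection onto the complement of the
`dr`-dimensional leading eigensubspace of `Sh`, one has
`tr(P⊥ S P⊥) ≤ Σ_{i>dr} λ_i(S) + 2√dr ‖Sh − S‖_F`. -/
theorem stmt_6 {d dr : ℕ} (hdr : dr ≤ d)
    (S Sh : Matrix (Fin d) (Fin d) ℝ)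
    (hS : S.PosSemidef) (hSh : Sh.PosSemidef)
    (μS μSh : Fin d → ℝ) (haS : Antitone μS) (haSh : Antitone μSh)
    (eS : ∃ σ : Equiv.Perm (Fin d), μS = hS.1.eigenvalues ∘ σ)
    (eSh : ∃ σ : Equiv.Perm (Fin d), μSh = hSh.1.eigenvalues ∘ σ)
    (V : Matrix (Fin d) (Fin dr) ℝ)
    (hV : Vᵀ * V = 1)
    (hEig : ∀ j : Fin dr,
      Sh.mulVec (fun i => V i j) = μSh (Fin.castLE hdr j) • (fun i => V i j)) :
    Matrix.trace ((1 - V * Vᵀ) * S * (1 - V * Vᵀ)) ≤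
      (∑ i ∈ Finset.univ.filter (fun i : Fin d => dr ≤ (i : ℕ)), μS i)
        + 2 * Real.sqrt dr * frob (Sh - S) := by
  obtain ⟨σS, hσS⟩ := eS
  obtain ⟨σSh, hσSh⟩ := eSh
  obtain ⟨ES, hES1, hES2⟩ := exists_E S hS.1 μS σS hσS
  obtain ⟨ESh, hESh1, hESh2⟩ := exists_E Sh hSh.1 μSh σSh hσSh
  set Q := V * Vᵀ with hQdef
  have hQsym : Qᵀ = Q := by
    rw [hQdef, Matrix.transpose_mul, Matrix.transpose_transpose]
  have hQidem : Q * Q = Q := by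
    rw [hQdef, Matrix.mul_assoc, ← Matrix.mul_assoc Vᵀ V, hV, Matrix.one_mul]
  -- Step 0: trace((1-Q) S (1-Q)) = trace S - trace (Q*S)
  have step0 : Matrix.trace ((1 - Q) * S * (1 - Q))
      = Matrix.trace S - Matrix.trace (Q * S) := by
    have e1 : (1 - Q) * S * (1 - Q) = S - Q * S - S * Q + Q * S * Q := by
      noncomm_ring
    rw [e1, Matrix.trace_add, Matrix.trace_sub, Matrix.trace_sub]
    have c1 : Matrix.trace (S * Q) = Matrix.trace (Q * S) := Matrix.trace_mul_comm S Q
    have c2 : Matrix.trace (Q * S * Q) = Matrix.trace (Q * S) := by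
      rw [Matrix.trace_mul_comm (Q * S) Q, ← Matrix.mul_assoc, hQidem]
    rw [c1, c2]; ring
  -- trace S = ∑ μS
  have hEScol : ∀ m : Fin d, (∑ i, ES i m * ES i m) = 1 := by
    intro m
    have := congrFun (congrFun hES1 m) m
    simpa [Matrix.mul_apply, Matrix.transpose_apply, Matrix.one_apply] using this
  have htrS : Matrix.trace S = ∑ i, μS i := by
    rw [Matrix.trace]
    simp only [Matrix.diag]
    calc ∑ i, S i i = ∑ i, ∑ m, μS m * (ES i m * ES i m) :=
          Finset.sum_congr rfl fun i _ => entry_decomp S ES μS hES1 hES2 i i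
      _ = ∑ m, μS m * ∑ i, ES i m * ES i m := by
          rw [Finset.sum_comm]
          exact Finset.sum_congr rfl fun m _ => (Finset.mul_sum _ _ _).symm
      _ = ∑ i, μS i := by
          refine Finset.sum_congr rfl fun m _ => ?_
          rw [hEScol m, mul_one]
  -- trace (Q * Sh)
  have hQSh : Matrix.trace (Q * Sh) = ∑ j : Fin dr, μSh (Fin.castLE hdr j) := by
    rw [hQdef]
    exact traceB Sh V hV (fun j => μSh (Fin.castLE hdr j)) hEig
  -- W : first dr eigenvectors of S
  set W : Matrix (Fin d) (Fin dr) ℝ :=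
    Matrix.of (fun i j => ES i (Fin.castLE hdr j)) with hWdef
  have hWsym : (W * Wᵀ)ᵀ = W * Wᵀ := by
    rw [Matrix.transpose_mul, Matrix.transpose_transpose]
  have hWortho : Wᵀ * W = 1 := by
    ext j j'
    have h := congrFun (congrFun hES1 (Fin.castLE hdr j)) (Fin.castLE hdr j')
    simp only [Matrix.mul_apply, Matrix.transpose_apply, Matrix.one_apply,
      Matrix.of_apply] at h ⊢
    simp only [hWdef, Matrix.of_apply]
    rw [h]
    simp [Fin.castLE_inj]
  have hWeig : ∀ j : Fin dr,
      S *ᵥ (fun i => W i j) = μS (Fin.castLE hdr j) • (fun i => W i j) :=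
    fun j => hES2 (Fin.castLE hdr j)
  have hWQS : Matrix.trace (W * Wᵀ * S) = ∑ j : Fin dr, μS (Fin.castLE hdr j) :=
    traceB S W hWortho _ hWeig
  have hKF : Matrix.trace (W * Wᵀ * Sh) ≤
      ∑ i ∈ Finset.univ.filter (fun i : Fin d => (i : ℕ) < dr), μSh i :=
    kyfan hdr Sh ESh μSh haSh hESh1 hESh2 W hWortho
  -- Cauchy-Schwarz bounds
  have hfrobQ : frob Q = Real.sqrt dr := by rw [hQdef]; exact frob_proj V hV
  have hfrobW : frob (W * Wᵀ) = Real.sqrt dr := frob_proj W hWortho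
  have hCS1 := traceCS Q (Sh - S) hQsym
  have hCS2 := traceCS (W * Wᵀ) (Sh - S) hWsym
  rw [hfrobQ] at hCS1
  rw [hfrobW] at hCS2
  have hCS1' := abs_le.mp hCS1
  have hCS2' := abs_le.mp hCS2
  -- trace splitting
  have hsplit1 : Matrix.trace (Q * (Sh - S))
      = Matrix.trace (Q * Sh) - Matrix.trace (Q * S) := by
    rw [Matrix.mul_sub, Matrix.trace_sub]
  have hsplit2 : Matrix.trace ((W * Wᵀ) * (Sh - S))
      = Matrix.trace (W * Wᵀ * Sh) - Matrix.trace (W * Wᵀ * S) := by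
    rw [Matrix.mul_sub, Matrix.trace_sub]
  -- sums over filters
  have hsum1 : ∑ i ∈ Finset.univ.filter (fun i : Fin d => (i : ℕ) < dr), μSh i
      = ∑ j : Fin dr, μSh (Fin.castLE hdr j) := sum_filter_lt hdr μSh
  have hsum2 : ∑ i ∈ Finset.univ.filter (fun i : Fin d => (i : ℕ) < dr), μS i
      = ∑ j : Fin dr, μS (Fin.castLE hdr j) := sum_filter_lt hdr μS
  have hall : (∑ i ∈ Finset.univ.filter (fun i : Fin d => (i : ℕ) < dr), μS i)
      + (∑ i ∈ Finset.univ.filter (fun i : Fin d => dr ≤ (i : ℕ)), μS i)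
      = ∑ i, μS i := by
    have := Finset.sum_filter_add_sum_filter_not Finset.univ
      (fun i : Fin d => (i : ℕ) < dr) μS
    rw [← this]
    congr 1
    apply Finset.sum_congr _ fun _ _ => rfl
    apply Finset.filter_congr
    intro i _
    simp [not_lt]
  rw [step0, htrS]
  have hfnn : 0 ≤ frob (Sh - S) := frob_nonneg _
  linarith [hCS1'.1, hCS1'.2, hCS2'.1, hCS2'.2]
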